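/- Let d ∈ ℕ and r ∈ ℕ. There exists a constant C > 0, depending only on d and r, such that for every v ∈ ℕ_0 and every u ∈ ℝ^d with all coordinates u_j > 0, the following hold for σ^r(v,u) := ∑_{s ∈ ℕ_0^d, s_1+…+s_d = v} ∏_{j=1}^d min((2^{s_j} u_j)^{r/2}, (2^{s_j} u_j)^{−r/2}) and pr(u,d) := ∏_{j=1}^d u_j: (I) if 2^v · pr(u,d) ≥ 1 then σ^r(v,u) ≤ C · (log(2^{v+1} · pr(u,d)))^{d−1} / (2^v · pr(u,d))^{r/2}; (II) if 2^v · pr(u,d) ≤ 1 then σ^r(v,u) ≤ C · (2^v · pr(u,d))^{r/2} · (log(2/(2^v · pr(u,d))))^{d−1}. -/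

import Mathlib

open Finset Real


lemma geom_bound (ρ : ℝ) (hρ : 0 < ρ) (T : Finset ℕ) :
    ∑ j ∈ T, Real.exp (-ρ) ^ j ≤ (1 - Real.exp (-ρ))⁻¹ := by
  have hx0 : (0:ℝ) ≤ Real.exp (-ρ) := (Real.exp_pos _).le
  have hx1 : Real.exp (-ρ) < 1 := by
    rw [Real.exp_lt_one_iff]; linarith
  calc ∑ j ∈ T, Real.exp (-ρ) ^ j ≤ ∑' j : ℕ, Real.exp (-ρ) ^ j := by
        apply Summable.sum_le_tsum _ (fun j _ => by positivity)
        exact summable_geometric_of_lt_one hx0 hx1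
    _ = (1 - Real.exp (-ρ))⁻¹ := tsum_geometric_of_lt_one hx0 hx1

lemma sum_exp_le (ρ : ℝ) (hρ : 0 < ρ) (S : Finset ℕ) (m : ℕ) (hkm : ∀ k ∈ S, k ≤ m) :
    ∑ k ∈ S, Real.exp (-(ρ * ((m:ℝ) - k))) ≤ (1 - Real.exp (-ρ))⁻¹ := by
  have key : ∀ k ∈ S, Real.exp (-(ρ * ((m:ℝ) - k))) = Real.exp (-ρ) ^ (m - k) := by
    intro k hk
    rw [← Real.exp_nat_mul]
    congr 1
    have := hkm k hk
    push_cast [Nat.cast_sub this]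
    ring
  rw [Finset.sum_congr rfl key]
  calc ∑ k ∈ S, Real.exp (-ρ) ^ (m - k)
      = ∑ j ∈ S.image (fun k => m - k), Real.exp (-ρ) ^ j := by
        rw [Finset.sum_image (by intro x hx y hy hxy; have := hkm x hx; have := hkm y hy; simp only at hxy; omega)]
    _ ≤ (1 - Real.exp (-ρ))⁻¹ := geom_bound ρ hρ _

lemma tail_left (ρ a : ℝ) (hρ : 0 < ρ) (S : Finset ℕ) (h : ∀ k ∈ S, (k:ℝ) < a) :
    ∑ k ∈ S, Real.exp (-(ρ * (a - k))) ≤ (1 - Real.exp (-ρ))⁻¹ := by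
  rcases S.eq_empty_or_nonempty with rfl | ⟨k₀, hk₀⟩
  · simp
    have : Real.exp (-ρ) < 1 := by rw [Real.exp_lt_one_iff]; linarith
    have : 0 < 1 - Real.exp (-ρ) := by linarith
    positivity
  have ha : 0 < a := lt_of_le_of_lt (Nat.cast_nonneg k₀) (h k₀ hk₀)
  have hc : (0:ℤ) < ⌈a⌉ := Int.lt_ceil.2 (by exact_mod_cast ha)
  set m : ℕ := (⌈a⌉).toNat - 1 with hm
  have hmz : (m:ℤ) = ⌈a⌉ - 1 := by omega
  have hma : (m:ℝ) ≤ a := by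
    have h2 : ((⌈a⌉:ℝ)) < a + 1 := by exact_mod_cast Int.ceil_lt_add_one a
    have : (m:ℝ) = (⌈a⌉:ℝ) - 1 := by exact_mod_cast congrArg (Int.cast : ℤ → ℝ) hmz
    linarith
  have hkm : ∀ k ∈ S, k ≤ m := by
    intro k hk
    have : (k:ℤ) < ⌈a⌉ := Int.lt_ceil.2 (by exact_mod_cast h k hk)
    omega
  calc ∑ k ∈ S, Real.exp (-(ρ * (a - k)))
      ≤ ∑ k ∈ S, Real.exp (-(ρ * ((m:ℝ) - k))) := by
        apply Finset.sum_le_sum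
        intro k hk
        apply Real.exp_le_exp.2
        have : (k:ℝ) ≤ m := by exact_mod_cast hkm k hk
        nlinarith [hkm k hk]
    _ ≤ (1 - Real.exp (-ρ))⁻¹ := sum_exp_le ρ hρ S m hkm

lemma tail_right (ρ b : ℝ) (hρ : 0 < ρ) (S : Finset ℕ) (h : ∀ k ∈ S, b < (k:ℝ)) :
    ∑ k ∈ S, Real.exp (-(ρ * ((k:ℝ) - b))) ≤ (1 - Real.exp (-ρ))⁻¹ := by
  set m : ℕ := (⌊b⌋ + 1).toNat with hm
  have hbm : b ≤ (m:ℝ) := by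
    have h1 : b < (⌊b⌋:ℝ) + 1 := Int.lt_floor_add_one b
    have h2 : ((⌊b⌋ + 1 : ℤ):ℝ) ≤ ((m:ℤ):ℝ) := by exact_mod_cast Int.cast_le.2 (Int.self_le_toNat _)
    push_cast at h2 ⊢
    linarith
  have hmk : ∀ k ∈ S, m ≤ k := by
    intro k hk
    have : ⌊b⌋ < (k:ℤ) := Int.floor_lt.2 (by exact_mod_cast h k hk)
    omega
  have key : ∀ k ∈ S, Real.exp (-(ρ * ((k:ℝ) - b))) ≤ Real.exp (-ρ) ^ (k - m) := by
    intro k hk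
    rw [← Real.exp_nat_mul]
    apply Real.exp_le_exp.2
    have h1 : (m:ℝ) ≤ k := by exact_mod_cast hmk k hk
    have h2 : ((k - m : ℕ):ℝ) = (k:ℝ) - m := by
      push_cast [Nat.cast_sub (hmk k hk)]; ring
    rw [h2]
    nlinarith
  calc ∑ k ∈ S, Real.exp (-(ρ * ((k:ℝ) - b))) ≤ ∑ k ∈ S, Real.exp (-ρ) ^ (k - m) :=
        Finset.sum_le_sum key
    _ = ∑ j ∈ S.image (fun k => k - m), Real.exp (-ρ) ^ j := by
        rw [Finset.sum_image (by intro x hx y hy hxy; have := hmk x hx; have := hmk y hy; simp only at hxy; omega)]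
    _ ≤ (1 - Real.exp (-ρ))⁻¹ := geom_bound ρ hρ _

lemma card_mid (a b : ℝ) (hab : a ≤ b) (S : Finset ℕ) (h : ∀ k ∈ S, a ≤ (k:ℝ) ∧ (k:ℝ) ≤ b) :
    (S.card : ℝ) ≤ b - a + 1 := by
  rcases S.eq_empty_or_nonempty with rfl | ⟨k₀, hk₀⟩
  · simp; linarith
  have hb0 : (0:ℝ) ≤ b := le_trans (Nat.cast_nonneg k₀) (h k₀ hk₀).2
  set n₁ : ℕ := (⌈a⌉).toNat with hn1
  set n₂ : ℕ := (⌊b⌋).toNat with hn2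
  have hsub : S ⊆ Finset.Icc n₁ n₂ := by
    intro k hk
    obtain ⟨h1, h2⟩ := h k hk
    simp only [Finset.mem_Icc]
    constructor
    · have : ⌈a⌉ ≤ (k:ℤ) := Int.ceil_le.2 (by exact_mod_cast h1)
      omega
    · have : (k:ℤ) ≤ ⌊b⌋ := Int.le_floor.2 (by exact_mod_cast h2)
      omega
  have hcard : S.card ≤ n₂ + 1 - n₁ := by
    have := Finset.card_le_card hsub
    simpa [Nat.card_Icc] using this
  have h1 : a ≤ (n₁:ℝ) := by
    rcases le_or_gt 0 ⌈a⌉ with hc | hc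
    · have : ((n₁:ℤ):ℝ) = ((⌈a⌉:ℤ):ℝ) := by exact_mod_cast congrArg (Int.cast : ℤ → ℝ) (Int.toNat_of_nonneg hc)
      push_cast at this
      rw [this]; exact Int.le_ceil a
    · have : n₁ = 0 := by omega
      rw [this]
      have : (⌈a⌉:ℝ) < 0 := by exact_mod_cast hc
      have := Int.le_ceil a
      push_cast
      linarith
  have h2 : (n₂:ℝ) ≤ b := by
    have hfb : (0:ℤ) ≤ ⌊b⌋ := Int.floor_nonneg.2 hb0
    have : ((n₂:ℤ):ℝ) = ((⌊b⌋:ℤ):ℝ) := by exact_mod_cast congrArg (Int.cast : ℤ → ℝ) (Int.toNat_of_nonneg hfb)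
    push_cast at this
    rw [this]; exact Int.floor_le b
  have : (S.card : ℝ) ≤ (n₂:ℝ) + 1 - n₁ := by
    have := (Nat.cast_le (α := ℝ)).2 hcard
    have h3 : ((n₂ + 1 - n₁ : ℕ):ℝ) ≤ (n₂:ℝ) + 1 - n₁ := by
      rcases le_or_gt n₁ (n₂ + 1) with hle | hlt
      · rw [Nat.cast_sub hle]; push_cast; linarith
      · exfalso
        have : k₀ ∈ Finset.Icc n₁ n₂ := hsub hk₀
        simp only [Finset.mem_Icc] at this
        omega
    linarith
  linarith

lemma exp_inv_pos (ρ : ℝ) (hρ : 0 < ρ) : 0 < (1 - Real.exp (-ρ))⁻¹ := by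
  have : Real.exp (-ρ) < 1 := by rw [Real.exp_lt_one_iff]; linarith
  have : 0 < 1 - Real.exp (-ρ) := by linarith
  positivity

lemma step (ρ : ℝ) (hρ : 0 < ρ) (v : ℕ) (a b : ℝ) (hab : a ≤ b) :
    ∑ k ∈ Finset.range (v+1), Real.exp (-(ρ * (|(k:ℝ) - a| + |(k:ℝ) - b| - (b - a)))) ≤
    (1 + 2 * (1 - Real.exp (-ρ))⁻¹) * (1 + (b - a)) := by
  classical
  set G := (1 - Real.exp (-ρ))⁻¹ with hG
  have hGpos : 0 < G := exp_inv_pos ρ hρ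
  set S := Finset.range (v+1) with hS
  set f : ℕ → ℝ := fun k => Real.exp (-(ρ * (|(k:ℝ) - a| + |(k:ℝ) - b| - (b - a)))) with hf
  have hsplit : ∑ k ∈ S, f k =
      (∑ k ∈ S.filter (fun k : ℕ => (k:ℝ) < a), f k) +
      ((∑ k ∈ (S.filter (fun k : ℕ => ¬ (k:ℝ) < a)).filter (fun k : ℕ => (k:ℝ) ≤ b), f k) +
       (∑ k ∈ (S.filter (fun k : ℕ => ¬ (k:ℝ) < a)).filter (fun k : ℕ => ¬ (k:ℝ) ≤ b), f k)) := by
    rw [Finset.sum_filter_add_sum_filter_not, Finset.sum_filter_add_sum_filter_not]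
  rw [hsplit]
  have h1 : ∑ k ∈ S.filter (fun k : ℕ => (k:ℝ) < a), f k ≤ G := by
    have hmem : ∀ k ∈ S.filter (fun k : ℕ => (k:ℝ) < a), (k:ℝ) < a := by
      intro k hk; exact (Finset.mem_filter.1 hk).2
    calc ∑ k ∈ S.filter (fun k : ℕ => (k:ℝ) < a), f k
        ≤ ∑ k ∈ S.filter (fun k : ℕ => (k:ℝ) < a), Real.exp (-(ρ * (a - k))) := by
          apply Finset.sum_le_sum
          intro k hk
          have hk' := hmem k hk
          simp only [hf]
          apply Real.exp_le_exp.2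
          rw [abs_of_nonpos (by linarith), abs_of_nonpos (by linarith)]
          nlinarith
      _ ≤ G := tail_left ρ a hρ _ hmem
  have h3 : ∑ k ∈ (S.filter (fun k : ℕ => ¬ (k:ℝ) < a)).filter (fun k : ℕ => ¬ (k:ℝ) ≤ b), f k ≤ G := by
    have hmem : ∀ k ∈ (S.filter (fun k : ℕ => ¬ (k:ℝ) < a)).filter (fun k : ℕ => ¬ (k:ℝ) ≤ b),
        b < (k:ℝ) := by
      intro k hk; exact lt_of_not_ge (Finset.mem_filter.1 hk).2
    calc ∑ k ∈ (S.filter (fun k : ℕ => ¬ (k:ℝ) < a)).filter (fun k : ℕ => ¬ (k:ℝ) ≤ b), f k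
        ≤ ∑ k ∈ (S.filter (fun k : ℕ => ¬ (k:ℝ) < a)).filter (fun k : ℕ => ¬ (k:ℝ) ≤ b),
            Real.exp (-(ρ * ((k:ℝ) - b))) := by
          apply Finset.sum_le_sum
          intro k hk
          have hk' := hmem k hk
          simp only [hf]
          apply Real.exp_le_exp.2
          rw [abs_of_nonneg (by linarith), abs_of_nonneg (by linarith)]
          nlinarith
      _ ≤ G := tail_right ρ b hρ _ hmem
  have h2 : ∑ k ∈ (S.filter (fun k : ℕ => ¬ (k:ℝ) < a)).filter (fun k : ℕ => (k:ℝ) ≤ b), f k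
      ≤ b - a + 1 := by
    have hmem : ∀ k ∈ (S.filter (fun k : ℕ => ¬ (k:ℝ) < a)).filter (fun k : ℕ => (k:ℝ) ≤ b),
        a ≤ (k:ℝ) ∧ (k:ℝ) ≤ b := by
      intro k hk
      have h := Finset.mem_filter.1 hk
      exact ⟨le_of_not_gt (Finset.mem_filter.1 h.1).2, h.2⟩
    calc ∑ k ∈ (S.filter (fun k : ℕ => ¬ (k:ℝ) < a)).filter (fun k : ℕ => (k:ℝ) ≤ b), f k
        = ∑ k ∈ (S.filter (fun k : ℕ => ¬ (k:ℝ) < a)).filter (fun k : ℕ => (k:ℝ) ≤ b), 1 := by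
          apply Finset.sum_congr rfl
          intro k hk
          obtain ⟨hka, hkb⟩ := hmem k hk
          simp only [hf]
          rw [abs_of_nonneg (by linarith), abs_of_nonpos (by linarith)]
          norm_num
      _ = ((S.filter (fun k : ℕ => ¬ (k:ℝ) < a)).filter (fun k : ℕ => (k:ℝ) ≤ b)).card := by simp
      _ ≤ b - a + 1 := card_mid a b hab _ hmem
  nlinarith [hGpos, sub_nonneg.2 hab]

lemma poly_le (ρ : ℝ) (hρ : 0 < ρ) (n : ℕ) :
    ∃ K : ℝ, 0 < K ∧ ∀ g : ℝ, 0 ≤ g → (1+g)^n ≤ K * Real.exp (ρ*g) := by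
  rcases Nat.eq_zero_or_pos n with rfl | hn
  · exact ⟨1, one_pos, fun g hg => by simpa using Real.one_le_exp (by positivity)⟩
  set ε := ρ / n with hε
  have hεpos : 0 < ε := by positivity
  set M := max 1 (1/ε) with hM
  have hM1 : 1 ≤ M := le_max_left _ _
  have hMε : 1 ≤ M * ε := by
    have : 1/ε ≤ M := le_max_right _ _
    calc (1:ℝ) = (1/ε) * ε := by field_simp
      _ ≤ M * ε := by nlinarith
  refine ⟨M^n, by positivity, fun g hg => ?_⟩
  have key : 1 + g ≤ M * Real.exp (ε * g) := by
    have h1 : 1 + ε * g ≤ Real.exp (ε * g) := Real.add_one_le_exp (ε * g) |>.trans_eq' (by ring)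
    have h2 : 1 + g ≤ M * (1 + ε * g) := by nlinarith
    nlinarith [Real.exp_pos (ε * g), mul_nonneg hεpos.le hg]
  calc (1+g)^n ≤ (M * Real.exp (ε * g))^n := by
        apply pow_le_pow_left₀ (by linarith) key
    _ = M^n * Real.exp (ε * g)^n := mul_pow _ _ _
    _ = M^n * Real.exp (ρ * g) := by
        rw [← Real.exp_nat_mul]
        congr 1
        field_simp [hε]
        have hn' : (n:ℝ) ≠ 0 := by positivity
        congr 1
        rw [hε]
        field_simp

theorem sum_AT_succ (d v : ℕ) (F : (Fin (d+1) → ℕ) → ℝ) :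
    ∑ s ∈ Finset.Nat.antidiagonalTuple (d+1) v, F s =
    ∑ k ∈ Finset.range (v+1), ∑ s ∈ Finset.Nat.antidiagonalTuple d (v - k), F (Fin.cons k s) := by
  have : ∑ s ∈ Finset.Nat.antidiagonalTuple (d+1) v, F s =
      ∑ x ∈ (Finset.range (v+1)).sigma (fun k => Finset.Nat.antidiagonalTuple d (v - k)),
        F (Fin.cons x.1 x.2) := by
    apply Finset.sum_nbij' (fun s => (⟨s 0, Fin.tail s⟩ : Σ _ : ℕ, (Fin d → ℕ)))
        (fun x => Fin.cons x.1 x.2)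
    · intro s hs
      simp only [Finset.Nat.mem_antidiagonalTuple] at hs
      rw [Fin.sum_univ_succ] at hs
      simp only [Finset.mem_sigma, Finset.mem_range, Finset.Nat.mem_antidiagonalTuple]
      constructor
      · omega
      · simp only [Fin.tail]
        omega
    · rintro ⟨k, s⟩ h
      simp only [Finset.mem_sigma, Finset.mem_range, Finset.Nat.mem_antidiagonalTuple] at h
      simp only [Finset.Nat.mem_antidiagonalTuple]
      rw [Fin.sum_univ_succ]
      simp only [Fin.cons_zero, Fin.cons_succ]
      omega
    · intro s hs; simp [Fin.cons_self_tail]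
    · rintro ⟨k, s⟩ h; simp
    · intro s hs; simp [Fin.cons_self_tail]
  rw [this, Finset.sum_sigma]

lemma main_lemma (ρ : ℝ) (hρ : 0 < ρ) : ∀ d : ℕ, 1 ≤ d → ∃ C : ℝ, 0 < C ∧
    ∀ (v : ℕ) (t : Fin d → ℝ),
    ∑ s ∈ Finset.Nat.antidiagonalTuple d v, Real.exp (-(ρ * ∑ j, |(s j : ℝ) + t j|)) ≤
    C * Real.exp (-(ρ * |(v:ℝ) + ∑ j, t j|)) * (1 + |(v:ℝ) + ∑ j, t j|) ^ (d - 1) := by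
  intro d hd
  induction d, hd using Nat.le_induction with
  | base =>
    refine ⟨1, one_pos, fun v t => ?_⟩
    rw [Finset.Nat.antidiagonalTuple_one, Finset.sum_singleton]
    simp [Fin.sum_univ_one]
  | succ d hd IH =>
    obtain ⟨C, hC, hbound⟩ := IH
    obtain ⟨K, hK, hpoly⟩ := poly_le (ρ/2) (by positivity) (d - 1)
    set Cs := (1 + 2 * (1 - Real.exp (-(ρ/2)))⁻¹) with hCs
    have hCspos : 0 < Cs := by
      have := exp_inv_pos (ρ/2) (by positivity)
      positivity
    refine ⟨C * K * Cs, by positivity, fun v t => ?_⟩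
    set t0 := t 0 with ht0
    set T' := ∑ j : Fin d, t (Fin.succ j) with hT'
    have hTsum : ∑ j : Fin (d+1), t j = t0 + T' := Fin.sum_univ_succ t
    set a := min (-t0) ((v:ℝ) + T') with ha
    set b := max (-t0) ((v:ℝ) + T') with hb
    have hab : a ≤ b := min_le_max
    have hba : b - a = |(v:ℝ) + ∑ j, t j| := by
      rw [hTsum, max_sub_min_eq_abs]
      congr 1
      ring
    rw [sum_AT_succ]
    have key : ∀ k ∈ Finset.range (v+1),
        ∑ s ∈ Finset.Nat.antidiagonalTuple d (v - k),
          Real.exp (-(ρ * ∑ j, |((Fin.cons k s : Fin (d+1) → ℕ) j : ℝ) + t j|)) ≤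
        (C * K * Real.exp (-(ρ * (b - a))) * (1 + (b - a)) ^ (d - 1)) *
          Real.exp (-(ρ/2 * (|(k:ℝ) - a| + |(k:ℝ) - b| - (b - a)))) := by
      intro k hk
      have hkv : k ≤ v := Nat.lt_succ_iff.1 (Finset.mem_range.1 hk)
      have hcast : ((v - k : ℕ) : ℝ) = (v:ℝ) - k := by
        push_cast [Nat.cast_sub hkv]; ring
      set x := (k:ℝ) + t0 with hx
      set y := (v:ℝ) - k + T' with hy
      have hsummand : ∀ s : Fin d → ℕ,
          ∑ j, |((Fin.cons k s : Fin (d+1) → ℕ) j : ℝ) + t j| = |x| + ∑ j, |(s j : ℝ) + t (Fin.succ j)| := by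
        intro s
        rw [Fin.sum_univ_succ]
        simp [Fin.cons_zero, Fin.cons_succ]
        rfl
      have hfact : ∑ s ∈ Finset.Nat.antidiagonalTuple d (v - k),
          Real.exp (-(ρ * ∑ j, |((Fin.cons k s : Fin (d+1) → ℕ) j : ℝ) + t j|)) =
          Real.exp (-(ρ * |x|)) * ∑ s ∈ Finset.Nat.antidiagonalTuple d (v - k),
            Real.exp (-(ρ * ∑ j, |(s j : ℝ) + t (Fin.succ j)|)) := by
        rw [Finset.mul_sum]
        apply Finset.sum_congr rfl
        intro s _
        rw [hsummand s, ← Real.exp_add]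
        congr 1
        ring
      rw [hfact]
      have hIH := hbound (v - k) (fun j => t (Fin.succ j))
      rw [hcast] at hIH
      have h1 : |x| = |(k:ℝ) - (-t0)| := by rw [hx]; congr 1; ring
      have h2 : |y| = |(k:ℝ) - ((v:ℝ) + T')| := by
        rw [hy, ← abs_neg]; congr 1; ring
      have hminmax : |(k:ℝ) - a| + |(k:ℝ) - b| = |(k:ℝ) - (-t0)| + |(k:ℝ) - ((v:ℝ) + T')| := by
        rw [ha, hb]
        rcases le_total (-t0) ((v:ℝ) + T') with h | h
        · rw [min_eq_left h, max_eq_right h]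
        · rw [min_eq_right h, max_eq_left h]; ring
      have hxy : |x| + |y| = (b - a) + (|(k:ℝ) - a| + |(k:ℝ) - b| - (b - a)) := by
        rw [h1, h2, hminmax]; ring
      set g := |(k:ℝ) - a| + |(k:ℝ) - b| - (b - a) with hg
      have hgnn : 0 ≤ g := by
        have := abs_sub_abs_le_abs_sub ((k:ℝ) - a) ((k:ℝ) - b)
        have h3 : |((k:ℝ) - a) - ((k:ℝ) - b)| ≤ |(k:ℝ) - a| + |(k:ℝ) - b| :=
          (abs_sub _ _)
        have h4 : |((k:ℝ) - a) - ((k:ℝ) - b)| = b - a := by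
          rw [show ((k:ℝ) - a) - ((k:ℝ) - b) = b - a by ring, abs_of_nonneg (by linarith)]
        rw [hg]; linarith [h4 ▸ h3]
      have hynn : |y| ≤ (b - a) + g := by
        have : |x| ≥ 0 := abs_nonneg x
        linarith [hxy]
      calc Real.exp (-(ρ * |x|)) * ∑ s ∈ Finset.Nat.antidiagonalTuple d (v - k),
            Real.exp (-(ρ * ∑ j, |(s j : ℝ) + t (Fin.succ j)|))
          ≤ Real.exp (-(ρ * |x|)) * (C * Real.exp (-(ρ * |y|)) * (1 + |y|) ^ (d-1)) := by
            apply mul_le_mul_of_nonneg_left _ (Real.exp_pos _).le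
            exact hIH
        _ = C * Real.exp (-(ρ * (|x| + |y|))) * (1 + |y|) ^ (d-1) := by
            rw [show -(ρ * (|x| + |y|)) = -(ρ * |x|) + -(ρ * |y|) by ring, Real.exp_add]; ring
        _ ≤ C * Real.exp (-(ρ * (|x| + |y|))) * ((1 + (b-a)) * (1 + g)) ^ (d-1) := by
            apply mul_le_mul_of_nonneg_left _ (by positivity)
            apply pow_le_pow_left₀ (by positivity)
            have hba0 : 0 ≤ b - a := by linarith
            nlinarith [hynn, hgnn, hba0]
        _ = (C * Real.exp (-(ρ * (b - a))) * (1 + (b-a))^(d-1)) *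
              (Real.exp (-(ρ * g)) * (1 + g)^(d-1)) := by
            rw [hxy, show -(ρ * (b - a + g)) = -(ρ * (b - a)) + -(ρ * g) by ring,
              Real.exp_add, mul_pow]
            ring
        _ ≤ (C * Real.exp (-(ρ * (b - a))) * (1 + (b-a))^(d-1)) *
              (Real.exp (-(ρ * g)) * (K * Real.exp (ρ/2 * g))) := by
            have hba0 : 0 ≤ b - a := by linarith
            have h5 : (0:ℝ) ≤ 1 + (b - a) := by linarith
            apply mul_le_mul_of_nonneg_left _
              (mul_nonneg (by positivity) (pow_nonneg h5 _))
            exact mul_le_mul_of_nonneg_left (hpoly g hgnn) (Real.exp_pos _).le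
        _ = (C * K * Real.exp (-(ρ * (b - a))) * (1 + (b - a)) ^ (d - 1)) *
              Real.exp (-(ρ/2 * g)) := by
            rw [show -(ρ/2 * g) = -(ρ * g) + ρ/2 * g by ring, Real.exp_add]
            ring
    calc ∑ k ∈ Finset.range (v+1), ∑ s ∈ Finset.Nat.antidiagonalTuple d (v - k),
          Real.exp (-(ρ * ∑ j, |((Fin.cons k s : Fin (d+1) → ℕ) j : ℝ) + t j|))
        ≤ ∑ k ∈ Finset.range (v+1),
            (C * K * Real.exp (-(ρ * (b - a))) * (1 + (b - a)) ^ (d - 1)) *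
              Real.exp (-(ρ/2 * (|(k:ℝ) - a| + |(k:ℝ) - b| - (b - a)))) :=
          Finset.sum_le_sum key
      _ = (C * K * Real.exp (-(ρ * (b - a))) * (1 + (b - a)) ^ (d - 1)) *
            ∑ k ∈ Finset.range (v+1),
              Real.exp (-(ρ/2 * (|(k:ℝ) - a| + |(k:ℝ) - b| - (b - a)))) := by
          rw [Finset.mul_sum]
      _ ≤ (C * K * Real.exp (-(ρ * (b - a))) * (1 + (b - a)) ^ (d - 1)) * (Cs * (1 + (b - a))) := by
          have hba0 : 0 ≤ b - a := by linarith
          have h5 : (0:ℝ) ≤ 1 + (b - a) := by linarith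
          apply mul_le_mul_of_nonneg_left _
            (mul_nonneg (by positivity) (pow_nonneg h5 _))
          exact step (ρ/2) (by positivity) v a b hab
      _ = C * K * Cs * Real.exp (-(ρ * (b - a))) * ((1 + (b - a)) ^ (d - 1) * (1 + (b - a))) := by
          ring
      _ = C * K * Cs * Real.exp (-(ρ * |(v:ℝ) + ∑ j, t j|)) *
            (1 + |(v:ℝ) + ∑ j, t j|) ^ (d + 1 - 1) := by
          rw [hba, ← pow_succ]
          congr 2
          omega


/-- sigma^r(v,u) = sum over multi-indices s in N_0^d with s_1 + ... + s_d = v of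
prod_j min((2^{s_j} u_j)^{r/2}, (2^{s_j} u_j)^{-r/2}). -/
noncomputable def sigmaSum (r d : ℕ) (v : ℕ) (u : Fin d → ℝ) : ℝ :=
  ∑ s ∈ Finset.Nat.antidiagonalTuple d v,
    ∏ j, min (((2 : ℝ) ^ (s j) * u j) ^ ((r : ℝ) / 2))
             (((2 : ℝ) ^ (s j) * u j) ^ (-(r : ℝ) / 2))

/-- Let d, r in N. There is a constant C > 0 depending only on d and r such that for every
v in N_0 and every u in R^d with positive coordinates, with pr(u,d) = prod_j u_j:
(I) if 2^v * pr(u,d) >= 1 then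
    sigma^r(v,u) <= C * (log(2^{v+1} * pr(u,d)))^(d-1) / (2^v * pr(u,d))^(r/2);
(II) if 2^v * pr(u,d) <= 1 then
    sigma^r(v,u) <= C * (2^v * pr(u,d))^(r/2) * (log(2 / (2^v * pr(u,d))))^(d-1). -/
theorem statement10 :
    ∀ d : ℕ, 1 ≤ d → ∀ r : ℕ, 1 ≤ r → ∃ C : ℝ, 0 < C ∧
      ∀ v : ℕ, ∀ u : Fin d → ℝ, (∀ j, 0 < u j) →
        ((1 ≤ (2 : ℝ) ^ v * ∏ j, u j →
          sigmaSum r d v u ≤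
            C * Real.log ((2 : ℝ) ^ (v + 1) * ∏ j, u j) ^ (d - 1)
              / ((2 : ℝ) ^ v * ∏ j, u j) ^ ((r : ℝ) / 2)) ∧
        ((2 : ℝ) ^ v * ∏ j, u j ≤ 1 →
          sigmaSum r d v u ≤
            C * ((2 : ℝ) ^ v * ∏ j, u j) ^ ((r : ℝ) / 2)
              * Real.log (2 / ((2 : ℝ) ^ v * ∏ j, u j)) ^ (d - 1))) := by
  intro d hd r hr
  have hlog2 : 0 < Real.log 2 := Real.log_pos (by norm_num)
  have hr' : (0:ℝ) < (r:ℝ) := by exact_mod_cast hr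
  set ρ := (r:ℝ)/2 * Real.log 2 with hρdef
  have hρ : 0 < ρ := by positivity
  obtain ⟨Cm, hCm, hmain⟩ := main_lemma ρ hρ d hd
  refine ⟨Cm / (Real.log 2)^(d-1), by positivity, ?_⟩
  intro v u hu
  set t : Fin d → ℝ := fun j => Real.log (u j) / Real.log 2 with ht
  set A := (v:ℝ) + ∑ j, t j with hA
  have hprodpos : 0 < ∏ j, u j := Finset.prod_pos (fun j _ => hu j)
  have hPpos : (0:ℝ) < (2:ℝ)^v * ∏ j, u j := by positivity
  have hP : (2:ℝ)^v * ∏ j, u j = Real.exp (A * Real.log 2) := by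
    have h1 : Real.log ((2:ℝ)^v * ∏ j, u j) = A * Real.log 2 := by
      rw [Real.log_mul (by positivity) hprodpos.ne',
        Real.log_pow, Real.log_prod (fun j _ => (hu j).ne'), hA, add_mul,
        Finset.sum_mul]
      congr 1
      apply Finset.sum_congr rfl
      intro j _
      simp only [ht]
      field_simp
    rw [← h1, Real.exp_log hPpos]
  have hrpow : ((2:ℝ)^v * ∏ j, u j) ^ ((r:ℝ)/2) = Real.exp (ρ * A) := by
    rw [hP, ← Real.exp_mul]
    congr 1
    rw [hρdef]; ring
  have hsig : sigmaSum r d v u =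
      ∑ s ∈ Finset.Nat.antidiagonalTuple d v,
        Real.exp (-(ρ * ∑ j, |(s j:ℝ) + t j|)) := by
    unfold sigmaSum
    apply Finset.sum_congr rfl
    intro s _
    have hfac : ∀ j, min (((2:ℝ)^(s j) * u j) ^ ((r:ℝ)/2))
        (((2:ℝ)^(s j) * u j) ^ (-(r:ℝ)/2)) = Real.exp (-(ρ * |(s j:ℝ) + t j|)) := by
      intro j
      have hz : (0:ℝ) < (2:ℝ)^(s j) * u j := mul_pos (by positivity) (hu j)
      have hlz : Real.log ((2:ℝ)^(s j) * u j) = Real.log 2 * ((s j:ℝ) + t j) := by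
        rw [Real.log_mul (by positivity) (hu j).ne', Real.log_pow]
        simp only [ht]
        field_simp
      rw [Real.rpow_def_of_pos hz, Real.rpow_def_of_pos hz, hlz]
      rcases le_total ((s j:ℝ) + t j) 0 with h | h
      · rw [min_eq_left]
        · rw [abs_of_nonpos h, hρdef]
          congr 1
          ring
        · apply Real.exp_le_exp.2
          nlinarith [hlog2, hr'.le]
      · rw [min_eq_right]
        · rw [abs_of_nonneg h, hρdef]
          congr 1
          ring
        · apply Real.exp_le_exp.2
          nlinarith [hlog2, hr'.le]
    rw [Finset.prod_congr rfl (fun j _ => hfac j), ← Real.exp_sum]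
    congr 1
    simp [Finset.mul_sum]
  have hmainv := hmain v t
  rw [← hsig] at hmainv
  constructor
  · intro h1
    have hA0 : 0 ≤ A := by
      rw [hP] at h1
      have := Real.one_le_exp_iff.1 h1
      nlinarith
    have habs : |A| = A := abs_of_nonneg hA0
    have h2 : (2:ℝ)^(v+1) * ∏ j, u j = Real.exp ((A+1) * Real.log 2) := by
      rw [pow_succ, show (2:ℝ)^v * 2 * ∏ j, u j = 2 * ((2:ℝ)^v * ∏ j, u j) by ring, hP,
        show (A+1) * Real.log 2 = Real.log 2 + A * Real.log 2 by ring, Real.exp_add,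
        Real.exp_log two_pos]
    have h3 : Real.log ((2:ℝ)^(v+1) * ∏ j, u j) = (A+1) * Real.log 2 := by
      rw [h2, Real.log_exp]
    rw [h3, hrpow]
    have heq : Cm / (Real.log 2)^(d-1) * ((A+1) * Real.log 2) ^ (d-1) / Real.exp (ρ * A)
        = Cm * Real.exp (-(ρ * |A|)) * (1 + |A|) ^ (d-1) := by
      rw [habs, mul_pow, Real.exp_neg, show (1:ℝ) + A = A + 1 by ring]
      field_simp
    rw [heq]
    exact hmainv
  · intro h1
    have hA0 : A ≤ 0 := by
      rw [hP] at h1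
      have := Real.exp_le_one_iff.1 h1
      nlinarith
    have habs : |A| = -A := abs_of_nonpos hA0
    have h2 : 2 / ((2:ℝ)^v * ∏ j, u j) = Real.exp ((1 - A) * Real.log 2) := by
      rw [hP, show (1-A) * Real.log 2 = Real.log 2 - A * Real.log 2 by ring, Real.exp_sub,
        Real.exp_log two_pos]
    have h3 : Real.log (2 / ((2:ℝ)^v * ∏ j, u j)) = (1-A) * Real.log 2 := by
      rw [h2, Real.log_exp]
    rw [h3, hrpow]
    have heq : Cm / (Real.log 2)^(d-1) * Real.exp (ρ * A) * ((1-A) * Real.log 2) ^ (d-1)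
        = Cm * Real.exp (-(ρ * |A|)) * (1 + |A|) ^ (d-1) := by
      rw [habs, mul_pow, show -(ρ * -A) = ρ * A by ring, show (1:ℝ) + -A = 1 - A by ring]
      field_simp
    rw [heq]
    exact hmainv
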